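/- Let R(A,B,C) be a recollement of module categories. If there are only finitely many isomorphism classes of bricks in mod B, then there are only finitely many isomorphism classes of bricks in mod A and only finitely many isomorphism classes of bricks in mod C. -/
import Mathlib


open CategoryTheory CategoryTheory.Limits

universe v u₁ u₂ u₃

/-- A module `S` is a *brick* if its endomorphism ring is a division ring, i.e.
it is nontrivial (`𝟙 S ≠ 0`) and every nonzero endomorphism is invertible. -/
def IsBrick {R : Type u₁} [Ring R] (S : ModuleCat.{v} R) : Prop :=
  𝟙 S ≠ 0 ∧ ∀ f : S ⟶ S, f ≠ 0 → IsIso f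

/-- A set of modules is a *semibrick* if every member is a brick and there is no nonzero
homomorphism between non-isomorphic members. -/
def IsSemibrick {R : Type u₁} [Ring R] (𝒮 : Set (ModuleCat.{v} R)) : Prop :=
  (∀ S ∈ 𝒮, IsBrick S) ∧
    ∀ S₁ ∈ 𝒮, ∀ S₂ ∈ 𝒮, ¬ Nonempty (S₁ ≅ S₂) → ∀ f : S₁ ⟶ S₂, f = 0

/-- A recollement of `mod B` relative to `mod A` and `mod C`: six additive functors
with the four adjunctions, the three full embeddings, and the condition that the
essential image of `i_*` is the kernel of `j^*`. -/
structure ModuleRecollement (A : Type u₁) (B : Type u₂) (C : Type u₃)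
    [Ring A] [Ring B] [Ring C] where
  /-- `i^* : mod B → mod A` -/
  iUpperStar : ModuleCat.{v} B ⥤ ModuleCat.{v} A
  /-- `i_* : mod A → mod B` -/
  iStar : ModuleCat.{v} A ⥤ ModuleCat.{v} B
  /-- `i^! : mod B → mod A` -/
  iShriek : ModuleCat.{v} B ⥤ ModuleCat.{v} A
  /-- `j_! : mod C → mod B` -/
  jLowerShriek : ModuleCat.{v} C ⥤ ModuleCat.{v} B
  /-- `j^* : mod B → mod C` -/
  jUpperStar : ModuleCat.{v} B ⥤ ModuleCat.{v} C
  /-- `j_* : mod C → mod B` -/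
  jStar : ModuleCat.{v} C ⥤ ModuleCat.{v} B
  iUpperStar_additive : iUpperStar.Additive
  iStar_additive : iStar.Additive
  iShriek_additive : iShriek.Additive
  jLowerShriek_additive : jLowerShriek.Additive
  jUpperStar_additive : jUpperStar.Additive
  jStar_additive : jStar.Additive
  /-- `(i^*, i_*)` is an adjoint pair -/
  adj₁ : iUpperStar ⊣ iStar
  /-- `(i_*, i^!)` is an adjoint pair -/
  adj₂ : iStar ⊣ iShriek
  /-- `(j_!, j^*)` is an adjoint pair -/
  adj₃ : jLowerShriek ⊣ jUpperStar
  /-- `(j^*, j_*)` is an adjoint pair -/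
  adj₄ : jUpperStar ⊣ jStar
  iStar_full : iStar.Full
  iStar_faithful : iStar.Faithful
  jLowerShriek_full : jLowerShriek.Full
  jLowerShriek_faithful : jLowerShriek.Faithful
  jStar_full : jStar.Full
  jStar_faithful : jStar.Faithful
  /-- the essential image of `i_*` equals the kernel of `j^*` -/
  essImage_eq_ker : ∀ X : ModuleCat.{v} B,
    (∃ Y : ModuleCat.{v} A, Nonempty (iStar.obj Y ≅ X)) ↔ IsZero (jUpperStar.obj X)

/-- `mod R` has only finitely many isomorphism classes of bricks: there is a finite list of
bricks such that every brick is isomorphic to a member of the list. -/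
def HasFinitelyManyBricks (R : Type u₁) [Ring R] : Prop :=
  ∃ L : List (ModuleCat.{v} R), (∀ S ∈ L, IsBrick S) ∧
    ∀ S : ModuleCat.{v} R, IsBrick S → ∃ T ∈ L, Nonempty (S ≅ T)


open Classical in
theorem hasFinitelyManyBricks_of_fullyFaithful {A : Type u₁} {B : Type u₂}
    [Ring A] [Ring B] (F : ModuleCat.{v} A ⥤ ModuleCat.{v} B)
    [F.Additive] [F.Full] [F.Faithful]
    (hB : HasFinitelyManyBricks.{v} B) : HasFinitelyManyBricks.{v} A := by
  obtain ⟨L, hLbrick, hL⟩ := hB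
  have hbrick : ∀ S : ModuleCat.{v} A, IsBrick S → IsBrick (F.obj S) := by
    intro S hS
    constructor
    · intro h
      apply hS.1
      apply F.map_injective
      rw [F.map_id, F.map_zero, h]
    · intro g hg
      obtain ⟨f, rfl⟩ := F.map_surjective g
      have hf : f ≠ 0 := by
        intro h; apply hg; rw [h, F.map_zero]
      have := hS.2 f hf
      infer_instance
  set P : ModuleCat.{v} B → Prop :=
    fun T => ∃ S : ModuleCat.{v} A, IsBrick S ∧ Nonempty (F.obj S ≅ T) with hP
  refine ⟨L.filterMap (fun T => if h : P T then some h.choose else none), ?_, ?_⟩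
  · intro S hS
    rw [List.mem_filterMap] at hS
    obtain ⟨T, hT, hST⟩ := hS
    by_cases h : P T
    · simp only [dif_pos h] at hST
      rw [← Option.some_inj.mp hST]
      exact h.choose_spec.1
    · simp [dif_neg h] at hST
  · intro S hS
    obtain ⟨T, hT, ⟨e⟩⟩ := hL (F.obj S) (hbrick S hS)
    have hPT : P T := ⟨S, hS, ⟨e⟩⟩
    refine ⟨hPT.choose, ?_, ?_⟩
    · rw [List.mem_filterMap]
      exact ⟨T, hT, by simp [dif_pos hPT]⟩
    · obtain ⟨e'⟩ := hPT.choose_spec.2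
      exact ⟨F.preimageIso (e ≪≫ e'.symm)⟩

/-- In a recollement of module categories, if `mod B` has only finitely many isomorphism
classes of bricks, then so do `mod A` and `mod C`. -/
theorem finitelyManyBricks_of_recollement {A : Type u₁} {B : Type u₂} {C : Type u₃}
    [Ring A] [Ring B] [Ring C] (R : ModuleRecollement.{v} A B C)
    (hB : HasFinitelyManyBricks.{v} B) :
    HasFinitelyManyBricks.{v} A ∧ HasFinitelyManyBricks.{v} C := by
  haveI := R.iStar_additive
  haveI := R.iStar_full
  haveI := R.iStar_faithful
  haveI := R.jLowerShriek_additive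
  haveI := R.jLowerShriek_full
  haveI := R.jLowerShriek_faithful
  exact ⟨hasFinitelyManyBricks_of_fullyFaithful R.iStar hB,
    hasFinitelyManyBricks_of_fullyFaithful R.jLowerShriek hB⟩
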